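/- Let α ∈ (0,2). For every u > 0 the double sum F(u) := ∑_{s=1}^∞ e^{−u s} ∑_{t=s}^∞ t^{−1−α/2} converges, and there is a constant C = C(α) < ∞ such that for all u ∈ (0,1]: |F(u) − (2/α)·Γ(1−α/2)·u^{α/2−1}| ≤ C, where Γ is the Gamma function. In particular F(u) = (2/α)Γ(1−α/2) u^{α/2−1}(1 + O(u^{1−α/2})) as u ↓ 0. -/

import Mathlib

open scoped BigOperators

noncomputable section

namespace LongRange

open Set MeasureTheory Filter


lemma tsum_shift_le_integral (f : ℝ → ℝ) (c : ℝ)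
    (hant : AntitoneOn f (Set.Ici c))
    (hnn : ∀ x ∈ Set.Ici c, 0 ≤ f x)
    (hint : MeasureTheory.IntegrableOn f (Set.Ioi c)) :
    ∑' n : ℕ, f (c + 1 + n) ≤ ∫ x in Set.Ioi c, f x := by
  have hnn' : (0:ℝ→ℝ) ≤ᵐ[volume.restrict (Set.Ioi (c:ℝ))] f :=
    (ae_restrict_iff' measurableSet_Ioi).2 (ae_of_all _ fun x hx => hnn x (Set.Ioi_subset_Ici_self hx))
  refine Real.tsum_le_of_sum_range_le (fun n => hnn _ (by
      simp only [mem_Ici]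
      have : (0:ℝ) ≤ (n:ℝ) := Nat.cast_nonneg n
      linarith)) (fun N => ?_)
  have h1 : ∑ i ∈ Finset.range N, f (c + 1 + i)
      = ∑ i ∈ Finset.range N, f (c + (i + 1 : ℕ)) := by
    refine Finset.sum_congr rfl fun i _ => ?_
    congr 1
    push_cast
    ring
  have h2 : ∑ i ∈ Finset.range N, f (c + (i + 1 : ℕ)) ≤ ∫ x in c..(c+N), f x :=
    AntitoneOn.sum_le_integral (hant.mono (fun x hx => hx.1))
  have h3 : (∫ x in c..(c+N), f x) = ∫ x in Set.Ioc c (c+N), f x :=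
    intervalIntegral.integral_of_le (by linarith [Nat.cast_nonneg (α := ℝ) N])
  have h4 : (∫ x in Set.Ioc c (c+N), f x) ≤ ∫ x in Set.Ioi c, f x :=
    setIntegral_mono_set hint hnn' (HasSubset.Subset.eventuallyLE Set.Ioc_subset_Ioi_self)
  linarith

lemma integral_le_tsum_shift (f : ℝ → ℝ) (c : ℝ)
    (hant : AntitoneOn f (Set.Ici c))
    (hnn : ∀ x ∈ Set.Ici c, 0 ≤ f x)
    (hint : MeasureTheory.IntegrableOn f (Set.Ioi c))
    (hsum : Summable (fun n : ℕ => f (c + n))) :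
    (∫ x in Set.Ioi c, f x) ≤ ∑' n : ℕ, f (c + n) := by
  have hb : Tendsto (fun N : ℕ => c + N) atTop atTop :=
    tendsto_atTop_add_const_left _ _ tendsto_natCast_atTop_atTop
  have h1 : Tendsto (fun N : ℕ => ∫ x in c..(c+N), f x) atTop
      (nhds (∫ x in Set.Ioi c, f x)) :=
    MeasureTheory.intervalIntegral_tendsto_integral_Ioi _ hint hb
  refine le_of_tendsto h1 (Filter.Eventually.of_forall fun N => ?_)
  have h2 : (∫ x in c..(c+N), f x) ≤ ∑ i ∈ Finset.range N, f (c + i) :=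
    AntitoneOn.integral_le_sum (hant.mono (fun x hx => hx.1))
  exact h2.trans (Summable.sum_le_tsum _ (fun i _ => hnn _ (by simp [mem_Ici])) hsum)

/-- equivalence between `ℕ` and `{t : ℕ+ // s ≤ t}` -/
def eqv (s : ℕ+) : ℕ ≃ {t : ℕ+ // s ≤ t} where
  toFun n := ⟨⟨(s:ℕ) + n, Nat.lt_of_lt_of_le s.pos (Nat.le_add_right _ n)⟩,
    (PNat.coe_le_coe s _).1 (Nat.le_add_right _ n)⟩
  invFun t := (t.1 : ℕ) - (s:ℕ)
  left_inv n := by simp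
  right_inv t := by
    have h : (s:ℕ) ≤ (t.1:ℕ) := (PNat.coe_le_coe s t.1).2 t.2
    apply Subtype.ext
    apply PNat.coe_injective
    show (s:ℕ) + ((t.1:ℕ) - (s:ℕ)) = (t.1:ℕ)
    omega

def eqvP : ℕ ≃ ℕ+ where
  toFun n := ⟨n+1, n.succ_pos⟩
  invFun m := (m:ℕ) - 1
  left_inv n := by simp
  right_inv m := by
    apply PNat.coe_injective
    have := m.pos
    show (m:ℕ) - 1 + 1 = (m:ℕ)
    omega

lemma tsum_subtype_eq (α : ℝ) (s : ℕ+) :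
    (∑' t : {t : ℕ+ // s ≤ t}, (((t.1 : ℕ) : ℝ)) ^ (-1 - α / 2))
      = ∑' n : ℕ, (((s:ℕ):ℝ) + (n:ℝ)) ^ (-1 - α / 2) := by
  rw [← Equiv.tsum_eq (eqv s) (fun t : {t : ℕ+ // s ≤ t} => (((t.1 : ℕ) : ℝ)) ^ (-1 - α / 2))]
  refine tsum_congr fun n => ?_
  show ((((s:ℕ) + n : ℕ)) : ℝ) ^ (-1 - α / 2) = _
  congr 1
  push_cast
  ring

lemma tsum_pnat_eq (q : ℝ) :
    (∑' t : ℕ+, ((t : ℕ) : ℝ) ^ q) = ∑' n : ℕ, ((1:ℝ) + (n:ℝ)) ^ q := by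
  rw [← Equiv.tsum_eq eqvP (fun t : ℕ+ => ((t : ℕ) : ℝ) ^ q)]
  refine tsum_congr fun n => ?_
  show (((n + 1 : ℕ)) : ℝ) ^ q = _
  congr 1
  push_cast
  ring

lemma hsum_shift (q : ℝ) (hq : q < -1) (c : ℕ) :
    Summable (fun n : ℕ => ((c:ℝ) + (n:ℝ)) ^ q) := by
  have h := (Real.summable_nat_rpow.2 hq).comp_injective (add_right_injective c)
  refine h.congr fun n => ?_
  show ((c + n : ℕ) : ℝ) ^ q = _
  congr 1
  push_cast
  ring

lemma rpow_antitoneOn (q : ℝ) (hq : q ≤ 0) (c : ℝ) (hc : 0 < c) :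
    AntitoneOn (fun x : ℝ => x ^ q) (Set.Ici c) :=
  fun x hx _ _ hxy => Real.rpow_le_rpow_of_nonpos (lt_of_lt_of_le hc hx) hxy hq

lemma Gn_bounds (α : ℝ) (hα0 : 0 < α) (hα2 : α < 2) (c : ℝ) (hc1 : 1 ≤ c)
    (hsum : Summable (fun n : ℕ => (c + (n:ℝ)) ^ (-1 - α/2))) :
    (2/α) * c ^ (-(α/2)) ≤ (∑' n : ℕ, (c + (n:ℝ)) ^ (-1 - α/2)) ∧
    (∑' n : ℕ, (c + (n:ℝ)) ^ (-1 - α/2)) ≤ c ^ (-1 - α/2) + (2/α) * c ^ (-(α/2)) := by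
  have hc0 : (0:ℝ) < c := lt_of_lt_of_le one_pos hc1
  have hq : (-1 - α/2) < -1 := by linarith
  have hint : IntegrableOn (fun x : ℝ => x ^ (-1 - α/2)) (Set.Ioi c) :=
    integrableOn_Ioi_rpow_of_lt hq hc0
  have hval : (∫ x in Set.Ioi c, x ^ (-1 - α/2)) = (2/α) * c ^ (-(α/2)) := by
    rw [integral_Ioi_rpow_of_lt hq hc0, show (-1 - α/2) + 1 = -(α/2) by ring]
    field_simp
  have hant := rpow_antitoneOn (-1 - α/2) (by linarith) c hc0
  have hnn : ∀ x ∈ Set.Ici c, 0 ≤ x ^ (-1 - α/2) :=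
    fun x hx => Real.rpow_nonneg (le_trans hc0.le hx) _
  constructor
  · rw [← hval]
    exact integral_le_tsum_shift _ c hant hnn hint hsum
  · have h0 : (∑' n : ℕ, (c + (n:ℝ)) ^ (-1 - α/2))
        = c ^ (-1 - α/2) + ∑' n : ℕ, (c + 1 + (n:ℝ)) ^ (-1 - α/2) := by
      rw [Summable.tsum_eq_zero_add hsum]
      congr 1
      · norm_num
      · refine tsum_congr fun n => ?_
        congr 1
        push_cast
        ring
    have h1 := tsum_shift_le_integral _ c hant hnn hint
    rw [hval] at h1
    linarith

lemma A_bounds (α : ℝ) (hα0 : 0 < α) (hα2 : α < 2) (u : ℝ) (hu : 0 < u) :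
    Real.Gamma (1 - α/2) * u ^ (α/2 - 1) - 1/(1 - α/2)
        ≤ (∑' n : ℕ, ((1:ℝ) + (n:ℝ)) ^ (-(α/2)) * Real.exp (-(u * ((1:ℝ) + (n:ℝ))))) ∧
    (∑' n : ℕ, ((1:ℝ) + (n:ℝ)) ^ (-(α/2)) * Real.exp (-(u * ((1:ℝ) + (n:ℝ)))))
        ≤ Real.Gamma (1 - α/2) * u ^ (α/2 - 1) + 1 := by
  set f : ℝ → ℝ := fun x => x ^ (-(α/2)) * Real.exp (-(u * x)) with hf
  have h2 : (0:ℝ) < 1 - α/2 := by linarith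
  have hint0 : IntegrableOn f (Set.Ioi (0:ℝ)) := by
    have h := integrableOn_rpow_mul_exp_neg_mul_rpow (s := -(α/2)) (p := 1) (b := u)
      (by linarith) one_pos hu
    refine h.congr_fun (fun x _ => ?_) measurableSet_Ioi
    simp [Real.rpow_one, neg_mul, hf]
  have hint1 : IntegrableOn f (Set.Ioi (1:ℝ)) :=
    hint0.mono (Set.Ioi_subset_Ioi zero_le_one) le_rfl
  have hant : AntitoneOn f (Set.Ici (1:ℝ)) := by
    intro x hx y hy hxy
    have hx0 : (0:ℝ) < x := lt_of_lt_of_le one_pos hx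
    exact mul_le_mul (Real.rpow_le_rpow_of_nonpos hx0 hxy (by linarith))
      (Real.exp_le_exp.2 (by nlinarith)) (Real.exp_pos _).le
      (Real.rpow_nonneg hx0.le _)
  have hnn : ∀ x ∈ Set.Ici (1:ℝ), 0 ≤ f x := fun x hx =>
    mul_nonneg (Real.rpow_nonneg (le_trans zero_le_one hx) _) (Real.exp_pos _).le
  have hIval : (∫ x in Set.Ioi (0:ℝ), f x) = Real.Gamma (1 - α/2) * u ^ (α/2 - 1) := by
    have h := Real.integral_rpow_mul_exp_neg_mul_Ioi (a := 1 - α/2) (r := u) h2 hu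
    rw [show (1 - α/2) - 1 = -(α/2) by ring] at h
    rw [hf]
    rw [h, one_div, Real.inv_rpow hu.le, ← Real.rpow_neg hu.le,
      show -(1 - α/2) = α/2 - 1 by ring, mul_comm]
  have hgeom : Summable (fun n : ℕ => Real.exp (-u) * Real.exp (-u) ^ n) :=
    (summable_geometric_of_lt_one (Real.exp_nonneg _)
      (by rw [Real.exp_lt_one_iff]; linarith)).mul_left _
  have hexp_eq : ∀ n : ℕ, Real.exp (-(u * (1 + (n:ℝ)))) = Real.exp (-u) * Real.exp (-u) ^ n := by
    intro n
    rw [← Real.exp_nat_mul, ← Real.exp_add]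
    congr 1
    ring
  have hsum : Summable (fun n : ℕ => f (1 + (n:ℝ))) := by
    refine Summable.of_nonneg_of_le (fun n => ?_) (fun n => ?_) hgeom
    · exact mul_nonneg (Real.rpow_nonneg (by positivity) _) (Real.exp_pos _).le
    · rw [hf]
      simp only []
      rw [← hexp_eq n]
      refine mul_le_of_le_one_left (Real.exp_pos _).le ?_
      exact Real.rpow_le_one_of_one_le_of_nonpos (by linarith [Nat.cast_nonneg (α := ℝ) n])
        (by linarith)
  have hAeq : (∑' n : ℕ, ((1:ℝ) + (n:ℝ)) ^ (-(α/2)) * Real.exp (-(u * ((1:ℝ) + (n:ℝ)))))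
      = ∑' n : ℕ, f ((1:ℝ) + (n:ℝ)) := tsum_congr fun n => rfl
  constructor
  · -- lower bound
    have hlow := integral_le_tsum_shift f 1 hant hnn hint1 hsum
    have hunion : (∫ x in Set.Ioi (0:ℝ), f x)
        = (∫ x in Set.Ioc (0:ℝ) 1, f x) + ∫ x in Set.Ioi (1:ℝ), f x := by
      rw [← setIntegral_union (Set.Ioc_disjoint_Ioi le_rfl) measurableSet_Ioi
        (hint0.mono Set.Ioc_subset_Ioi_self le_rfl) hint1,
        Set.Ioc_union_Ioi_eq_Ioi zero_le_one]
    have hrpow_int : IntegrableOn (fun x : ℝ => x ^ (-(α/2))) (Set.Ioc (0:ℝ) 1) := by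
      have h : IntervalIntegrable (fun x : ℝ => x ^ (-(α/2))) volume 0 1 :=
        intervalIntegral.intervalIntegrable_rpow' (by linarith)
      rwa [intervalIntegrable_iff_integrableOn_Ioc_of_le zero_le_one] at h
    have hIoc : (∫ x in Set.Ioc (0:ℝ) 1, f x) ≤ 1/(1 - α/2) := by
      have ha : (∫ x in Set.Ioc (0:ℝ) 1, f x) ≤ ∫ x in Set.Ioc (0:ℝ) 1, x ^ (-(α/2)) := by
        refine setIntegral_mono_on (hint0.mono Set.Ioc_subset_Ioi_self le_rfl) hrpow_int
          measurableSet_Ioc (fun x hx => ?_)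
        rw [hf]
        refine mul_le_of_le_one_right (Real.rpow_nonneg hx.1.le _) ?_
        rw [Real.exp_le_one_iff]
        nlinarith [hx.1.le]
      have hb : (∫ x in Set.Ioc (0:ℝ) 1, x ^ (-(α/2))) = 1/(1 - α/2) := by
        rw [← intervalIntegral.integral_of_le zero_le_one,
          integral_rpow (Or.inl (by linarith : (-1:ℝ) < -(α/2)))]
        rw [Real.one_rpow, Real.zero_rpow (by linarith : -(α/2) + 1 ≠ 0)]
        field_simp
        ring_nf
      linarith
    rw [hAeq]
    linarith [hlow, hIoc, hunion, hIval.symm.le, hIval.le]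
  · -- upper bound
    rw [hAeq]
    rw [Summable.tsum_eq_zero_add hsum]
    have hfirst : f ((1:ℝ) + ((0:ℕ):ℝ)) ≤ 1 := by
      have : ((1:ℝ) + ((0:ℕ):ℝ)) = 1 := by norm_num
      rw [this]
      show (1:ℝ) ^ (-(α/2)) * Real.exp (-(u * 1)) ≤ 1
      rw [Real.one_rpow, one_mul, Real.exp_le_one_iff]
      linarith
    have hshift : (∑' n : ℕ, f ((1:ℝ) + ((n+1 : ℕ):ℝ)))
        = ∑' n : ℕ, f ((1:ℝ) + 1 + (n:ℝ)) := by
      refine tsum_congr fun n => ?_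
      congr 1
      push_cast
      ring
    rw [hshift]
    have hup := tsum_shift_le_integral f 1 hant hnn hint1
    have hmono : (∫ x in Set.Ioi (1:ℝ), f x) ≤ ∫ x in Set.Ioi (0:ℝ), f x := by
      have hnn' : (0:ℝ→ℝ) ≤ᵐ[volume.restrict (Set.Ioi (0:ℝ))] f :=
        (ae_restrict_iff' measurableSet_Ioi).2 (ae_of_all _ fun x hx =>
          mul_nonneg (Real.rpow_nonneg (le_of_lt hx) _) (Real.exp_pos _).le)
      exact setIntegral_mono_set hint0 hnn'
        (HasSubset.Subset.eventuallyLE (Set.Ioi_subset_Ioi zero_le_one))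
    rw [hIval] at hmono
    norm_num at hfirst hup ⊢
    linarith


/-- asymptotics of `F(u) = ∑_{s≥1} e^{−us} ∑_{t≥s} t^{−1−α/2}` as u ↓ 0. -/
theorem statement17 (α : ℝ) (hα0 : 0 < α) (hα2 : α < 2) :
    (∀ u : ℝ, 0 < u →
      (∀ s : ℕ+, Summable (fun t : {t : ℕ+ // s ≤ t} =>
        (((t.1 : ℕ) : ℝ)) ^ (-1 - α / 2))) ∧
      Summable (fun s : ℕ+ => Real.exp (-u * ((s : ℕ) : ℝ)) *
        ∑' t : {t : ℕ+ // s ≤ t}, (((t.1 : ℕ) : ℝ)) ^ (-1 - α / 2))) ∧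
    ∃ C : ℝ, 0 ≤ C ∧ ∀ u : ℝ, 0 < u → u ≤ 1 →
      |(∑' s : ℕ+, Real.exp (-u * ((s : ℕ) : ℝ)) *
          ∑' t : {t : ℕ+ // s ≤ t}, (((t.1 : ℕ) : ℝ)) ^ (-1 - α / 2)) -
        (2 / α) * Real.Gamma (1 - α / 2) * u ^ (α / 2 - 1)| ≤ C := by
  have hq : (-1 - α / 2) < -1 := by linarith
  have h2 : (0:ℝ) < 1 - α/2 := by linarith
  have hgN : Summable (fun n : ℕ => (n:ℝ) ^ (-1 - α / 2)) := Real.summable_nat_rpow.2 hq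
  have hgP : Summable (fun t : ℕ+ => ((t:ℕ):ℝ) ^ (-1 - α / 2)) :=
    hgN.comp_injective PNat.coe_injective
  have hsub : ∀ s : ℕ+, Summable (fun t : {t : ℕ+ // s ≤ t} =>
      (((t.1 : ℕ) : ℝ)) ^ (-1 - α / 2)) :=
    fun s => hgP.comp_injective Subtype.coe_injective
  -- bounds on the inner sums
  have hGbnd : ∀ s : ℕ+,
      (2/α) * ((s:ℕ):ℝ) ^ (-(α/2)) ≤ (∑' t : {t : ℕ+ // s ≤ t}, (((t.1 : ℕ) : ℝ)) ^ (-1 - α / 2))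
      ∧ (∑' t : {t : ℕ+ // s ≤ t}, (((t.1 : ℕ) : ℝ)) ^ (-1 - α / 2))
        ≤ ((s:ℕ):ℝ) ^ (-1 - α/2) + (2/α) * ((s:ℕ):ℝ) ^ (-(α/2)) := by
    intro s
    have hc1 : (1:ℝ) ≤ ((s:ℕ):ℝ) := by exact_mod_cast s.one_le
    rw [tsum_subtype_eq]
    exact Gn_bounds α hα0 hα2 ((s:ℕ):ℝ) hc1 (by
      have h := hsum_shift (-1 - α/2) hq (s:ℕ)
      exact h)
  have hGnn : ∀ s : ℕ+,
      0 ≤ (∑' t : {t : ℕ+ // s ≤ t}, (((t.1 : ℕ) : ℝ)) ^ (-1 - α / 2)) :=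
    fun s => tsum_nonneg fun t => Real.rpow_nonneg (Nat.cast_nonneg _) _
  -- summability facts for a fixed u > 0
  have hmain : ∀ u : ℝ, 0 < u →
      Summable (fun s : ℕ+ => Real.exp (-u * ((s:ℕ):ℝ))) ∧
      Summable (fun s : ℕ+ => Real.exp (-u * ((s:ℕ):ℝ)) * ((s:ℕ):ℝ) ^ (-1 - α / 2)) ∧
      Summable (fun s : ℕ+ => Real.exp (-u * ((s:ℕ):ℝ)) * ((s:ℕ):ℝ) ^ (-(α/2))) ∧
      Summable (fun s : ℕ+ => Real.exp (-u * ((s : ℕ) : ℝ)) *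
        ∑' t : {t : ℕ+ // s ≤ t}, (((t.1 : ℕ) : ℝ)) ^ (-1 - α / 2)) := by
    intro u hu
    have hexp_le_one : ∀ s : ℕ+, Real.exp (-u * ((s:ℕ):ℝ)) ≤ 1 := by
      intro s
      rw [Real.exp_le_one_iff]
      have hs1 : (1:ℝ) ≤ ((s:ℕ):ℝ) := by exact_mod_cast s.one_le
      nlinarith
    have hEN : Summable (fun n : ℕ => Real.exp (-u * (n:ℝ))) := by
      refine (summable_geometric_of_lt_one (Real.exp_nonneg (-u))
        (by rw [Real.exp_lt_one_iff]; linarith)).congr fun n => ?_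
      rw [← Real.exp_nat_mul]
      congr 1
      ring
    have hEP : Summable (fun s : ℕ+ => Real.exp (-u * ((s:ℕ):ℝ))) :=
      hEN.comp_injective PNat.coe_injective
    have hexpg : Summable (fun s : ℕ+ => Real.exp (-u * ((s:ℕ):ℝ)) * ((s:ℕ):ℝ) ^ (-1 - α / 2)) := by
      refine Summable.of_nonneg_of_le (fun s => ?_) (fun s => ?_) hgP
      · exact mul_nonneg (Real.exp_nonneg _) (Real.rpow_nonneg (Nat.cast_nonneg _) _)
      · exact mul_le_of_le_one_left (Real.rpow_nonneg (Nat.cast_nonneg _) _) (hexp_le_one s)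
    have hexpfs : Summable (fun s : ℕ+ => Real.exp (-u * ((s:ℕ):ℝ)) * ((s:ℕ):ℝ) ^ (-(α/2))) := by
      refine Summable.of_nonneg_of_le (fun s => ?_) (fun s => ?_) hEP
      · exact mul_nonneg (Real.exp_nonneg _) (Real.rpow_nonneg (Nat.cast_nonneg _) _)
      · refine mul_le_of_le_one_right (Real.exp_nonneg _) ?_
        refine Real.rpow_le_one_of_one_le_of_nonpos (by exact_mod_cast s.one_le) (by linarith)
    refine ⟨hEP, hexpg, hexpfs, ?_⟩
    refine Summable.of_nonneg_of_le (fun s => ?_) (fun s => ?_)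
      (hexpg.add (hexpfs.mul_left (2/α)))
    · exact mul_nonneg (Real.exp_nonneg _) (hGnn s)
    · calc Real.exp (-u * ((s:ℕ):ℝ)) *
          (∑' t : {t : ℕ+ // s ≤ t}, (((t.1 : ℕ) : ℝ)) ^ (-1 - α / 2))
          ≤ Real.exp (-u * ((s:ℕ):ℝ)) *
            (((s:ℕ):ℝ) ^ (-1 - α/2) + (2/α) * ((s:ℕ):ℝ) ^ (-(α/2))) :=
            mul_le_mul_of_nonneg_left (hGbnd s).2 (Real.exp_nonneg _)
        _ = Real.exp (-u * ((s:ℕ):ℝ)) * ((s:ℕ):ℝ) ^ (-1 - α / 2) +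
            (2/α) * (Real.exp (-u * ((s:ℕ):ℝ)) * ((s:ℕ):ℝ) ^ (-(α/2))) := by ring
  constructor
  · exact fun u hu => ⟨hsub, (hmain u hu).2.2.2⟩
  -- quantitative part
  refine ⟨(2/α) * (1/(1 - α/2)) + 2 * (2/α) + 1, ?_, ?_⟩
  · have hD : (0:ℝ) < 2/α := by positivity
    have hE : (0:ℝ) < 1/(1 - α/2) := by positivity
    nlinarith
  intro u hu _
  obtain ⟨hEP, hexpg, hexpfs, hFsum⟩ := hmain u hu
  have hexp_le_one : ∀ s : ℕ+, Real.exp (-u * ((s:ℕ):ℝ)) ≤ 1 := by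
    intro s
    rw [Real.exp_le_one_iff]
    have hs1 : (1:ℝ) ≤ ((s:ℕ):ℝ) := by exact_mod_cast s.one_le
    nlinarith
  -- B' ≤ 1 + 2/α
  have hKval : (∑' t : ℕ+, ((t:ℕ):ℝ) ^ (-1 - α / 2)) ≤ 1 + 2/α := by
    rw [tsum_pnat_eq]
    have h := (Gn_bounds α hα0 hα2 1 le_rfl (by simpa using hsum_shift (-1 - α/2) hq 1)).2
    rw [Real.one_rpow, Real.one_rpow] at h
    simpa using h
  have hB'le : (∑' s : ℕ+, Real.exp (-u * ((s:ℕ):ℝ)) * ((s:ℕ):ℝ) ^ (-1 - α / 2)) ≤ 1 + 2/α := by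
    refine le_trans (Summable.tsum_le_tsum (fun s => ?_) hexpg hgP) hKval
    exact mul_le_of_le_one_left (Real.rpow_nonneg (Nat.cast_nonneg _) _) (hexp_le_one s)
  -- A representation
  have hArepr : (∑' s : ℕ+, Real.exp (-u * ((s:ℕ):ℝ)) * ((s:ℕ):ℝ) ^ (-(α/2)))
      = ∑' n : ℕ, ((1:ℝ) + (n:ℝ)) ^ (-(α/2)) * Real.exp (-(u * ((1:ℝ) + (n:ℝ)))) := by
    rw [← Equiv.tsum_eq eqvP
      (fun s : ℕ+ => Real.exp (-u * ((s:ℕ):ℝ)) * ((s:ℕ):ℝ) ^ (-(α/2)))]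
    refine tsum_congr fun n => ?_
    show Real.exp (-u * (((n+1:ℕ)):ℝ)) * (((n+1:ℕ)):ℝ) ^ (-(α/2)) = _
    have hc : (((n+1:ℕ)):ℝ) = (1:ℝ) + (n:ℝ) := by push_cast; ring
    rw [hc, neg_mul]
    ring
  obtain ⟨hAlow, hAup⟩ := A_bounds α hα0 hα2 u hu
  rw [← hArepr] at hAlow hAup
  -- F bounds
  have hF_up : (∑' s : ℕ+, Real.exp (-u * ((s : ℕ) : ℝ)) *
        ∑' t : {t : ℕ+ // s ≤ t}, (((t.1 : ℕ) : ℝ)) ^ (-1 - α / 2))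
      ≤ (∑' s : ℕ+, Real.exp (-u * ((s:ℕ):ℝ)) * ((s:ℕ):ℝ) ^ (-1 - α / 2)) +
        (2/α) * (∑' s : ℕ+, Real.exp (-u * ((s:ℕ):ℝ)) * ((s:ℕ):ℝ) ^ (-(α/2))) := by
    have h1 : (∑' s : ℕ+, Real.exp (-u * ((s : ℕ) : ℝ)) *
          ∑' t : {t : ℕ+ // s ≤ t}, (((t.1 : ℕ) : ℝ)) ^ (-1 - α / 2))
        ≤ ∑' s : ℕ+, (Real.exp (-u * ((s:ℕ):ℝ)) * ((s:ℕ):ℝ) ^ (-1 - α / 2) +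
            (2/α) * (Real.exp (-u * ((s:ℕ):ℝ)) * ((s:ℕ):ℝ) ^ (-(α/2)))) := by
      refine Summable.tsum_le_tsum (fun s => ?_) hFsum (hexpg.add (hexpfs.mul_left (2/α)))
      calc Real.exp (-u * ((s:ℕ):ℝ)) *
          (∑' t : {t : ℕ+ // s ≤ t}, (((t.1 : ℕ) : ℝ)) ^ (-1 - α / 2))
          ≤ Real.exp (-u * ((s:ℕ):ℝ)) *
            (((s:ℕ):ℝ) ^ (-1 - α/2) + (2/α) * ((s:ℕ):ℝ) ^ (-(α/2))) :=
            mul_le_mul_of_nonneg_left (hGbnd s).2 (Real.exp_nonneg _)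
        _ = _ := by ring
    rwa [Summable.tsum_add hexpg (hexpfs.mul_left (2/α)), tsum_mul_left] at h1
  have hF_low : (2/α) * (∑' s : ℕ+, Real.exp (-u * ((s:ℕ):ℝ)) * ((s:ℕ):ℝ) ^ (-(α/2)))
      ≤ (∑' s : ℕ+, Real.exp (-u * ((s : ℕ) : ℝ)) *
        ∑' t : {t : ℕ+ // s ≤ t}, (((t.1 : ℕ) : ℝ)) ^ (-1 - α / 2)) := by
    have h1 : (∑' s : ℕ+, (2/α) * (Real.exp (-u * ((s:ℕ):ℝ)) * ((s:ℕ):ℝ) ^ (-(α/2))))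
        ≤ ∑' s : ℕ+, Real.exp (-u * ((s : ℕ) : ℝ)) *
          ∑' t : {t : ℕ+ // s ≤ t}, (((t.1 : ℕ) : ℝ)) ^ (-1 - α / 2) := by
      refine Summable.tsum_le_tsum (fun s => ?_) (hexpfs.mul_left (2/α)) hFsum
      calc (2/α) * (Real.exp (-u * ((s:ℕ):ℝ)) * ((s:ℕ):ℝ) ^ (-(α/2)))
          = Real.exp (-u * ((s:ℕ):ℝ)) * ((2/α) * ((s:ℕ):ℝ) ^ (-(α/2))) := by ring
        _ ≤ _ := mul_le_mul_of_nonneg_left (hGbnd s).1 (Real.exp_nonneg _)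
    rwa [tsum_mul_left] at h1
  have hD : (0:ℝ) < 2/α := by positivity
  have hE : (0:ℝ) < 1/(1 - α/2) := one_div_pos.2 h2
  have hDE : (0:ℝ) ≤ 2/α * (1/(1 - α/2)) := mul_nonneg hD.le hE.le
  have h5 := mul_le_mul_of_nonneg_left hAup hD.le
  have h6 := mul_le_mul_of_nonneg_left hAlow hD.le
  rw [abs_le]
  constructor
  · linarith [hF_low, h6, hDE]
  · linarith [hF_up, h5, hB'le, hDE]


end LongRange
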